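/- Let $k$ be a field of characteristic $p>3$, $n=2r$, and $B_n$ the truncated polynomial ring with Poisson bracket. The Lie center of $B_n$, namely $\{f \in B_n \mid [f,g]=0 \text{ for all } g \in B_n\}$, coincides with the scalars $k$. -/

import Mathlib

open MvPolynomial

set_option synthInstance.maxHeartbeats 1000000
set_option maxHeartbeats 1000000

noncomputable section

variable (k : Type) [Field k] (p n : ℕ)

/-- The ideal `⟨x₁^p, …, xₙ^p⟩` of the polynomial ring. -/
def truncIdeal : Ideal (MvPolynomial (Fin n) k) :=
  Ideal.span (Set.range fun i : Fin n => (X i : MvPolynomial (Fin n) k) ^ p)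

/-- The truncated polynomial ring `Bₙ = k[x₁,…,xₙ]/⟨xᵢ^p⟩`. -/
abbrev TruncPoly := MvPolynomial (Fin n) k ⧸ truncIdeal k p n

/-- The canonical projection `k[x]→ Bₙ`, as a `k`-algebra homomorphism. -/
def Bmk : MvPolynomial (Fin n) k →ₐ[k] TruncPoly k p n :=
  Ideal.Quotient.mkₐ k (truncIdeal k p n)

theorem Bmk_surjective : Function.Surjective (Bmk k p n) :=
  Ideal.Quotient.mkₐ_surjective k _

/-- The class of the variable `xᵢ` in `Bₙ`. -/
def mkX (i : Fin n) : TruncPoly k p n := Bmk k p n (X i)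

theorem pderiv_mem [CharP k p] (i : Fin n) {f : MvPolynomial (Fin n) k}
    (hf : f ∈ truncIdeal k p n) : pderiv i f ∈ truncIdeal k p n := by
  induction hf using Submodule.span_induction with
  | mem x hx =>
      obtain ⟨j, rfl⟩ := hx
      have h0 : (pderiv i) ((X j : MvPolynomial (Fin n) k) ^ p) = 0 := by
        rw [(pderiv i).leibniz_pow]
        have : (p : MvPolynomial (Fin n) k) = 0 := CharP.cast_eq_zero _ p
        rw [nsmul_eq_mul, this, zero_mul]
      rw [h0]; exact Ideal.zero_mem _
  | zero => simpa using Ideal.zero_mem _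
  | add x y hx hy ihx ihy => simpa [map_add] using Ideal.add_mem _ ihx ihy
  | smul c x hx ih =>
      rw [smul_eq_mul, (pderiv i).leibniz]
      exact Ideal.add_mem _ (Submodule.smul_mem _ _ ih)
        (by rw [smul_eq_mul, mul_comm]; exact Ideal.mul_mem_left _ _ hx)

/-- The partial derivative `∂ᵢ`, descended to the truncated polynomial ring. -/
def pd [CharP k p] (i : Fin n) : TruncPoly k p n → TruncPoly k p n :=
  fun f => Quotient.liftOn' f (fun g => Bmk k p n (pderiv i g)) (by
    intro a b hab
    have h : a - b ∈ truncIdeal k p n := by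
      rwa [Submodule.quotientRel_def] at hab
    have h2 := pderiv_mem k p n i h
    rw [map_sub] at h2
    have : Bmk k p n (pderiv i a) - Bmk k p n (pderiv i b) = 0 := by
      rw [← map_sub]
      exact (Ideal.Quotient.eq_zero_iff_mem).mpr h2
    exact sub_eq_zero.mp this)

@[simp] theorem pd_mk [CharP k p] (i : Fin n) (g : MvPolynomial (Fin n) k) :
    pd k p n i (Bmk k p n g) = Bmk k p n (pderiv i g) := rfl

/-- `∂ᵢ` as a `k`-derivation of `Bₙ`. -/
def pdD [CharP k p] (i : Fin n) :
    Derivation k (TruncPoly k p n) (TruncPoly k p n) where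
  toFun := pd k p n i
  map_add' := by
    intro a b
    obtain ⟨x, rfl⟩ := Bmk_surjective k p n a
    obtain ⟨y, rfl⟩ := Bmk_surjective k p n b
    show Bmk k p n (pderiv i (x + y)) = Bmk k p n (pderiv i x) + Bmk k p n (pderiv i y)
    rw [map_add, map_add]
  map_smul' := by
    intro c a
    obtain ⟨x, rfl⟩ := Bmk_surjective k p n a
    show Bmk k p n (pderiv i (c • x)) = c • Bmk k p n (pderiv i x)
    rw [(pderiv i).map_smul, map_smul]
  map_one_eq_zero' := by
    show Bmk k p n (pderiv i 1) = 0
    simp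
  leibniz' := by
    intro a b
    obtain ⟨x, rfl⟩ := Bmk_surjective k p n a
    obtain ⟨y, rfl⟩ := Bmk_surjective k p n b
    show Bmk k p n (pderiv i (x * y)) =
      Bmk k p n x * Bmk k p n (pderiv i y) + Bmk k p n y * Bmk k p n (pderiv i x)
    rw [(pderiv i).leibniz]
    simp only [smul_eq_mul, map_add, map_mul]

@[simp] theorem pdD_apply [CharP k p] (i : Fin n) (f : TruncPoly k p n) :
    pdD k p n i f = pd k p n i f := rfl

/-- The maximal ideal `𝔪 = (x₁,…,xₙ)` of `Bₙ`. -/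
def mIdeal : Ideal (TruncPoly k p n) := Ideal.span (Set.range (mkX k p n))

/-- Evaluation at the origin `κ : Bₙ → k`. -/
def kappa (hp : 0 < p) : TruncPoly k p n →ₐ[k] k :=
  Ideal.Quotient.liftₐ (truncIdeal k p n) (aeval (0 : Fin n → k)) (by
    intro a ha
    have h : truncIdeal k p n ≤ RingHom.ker
        (aeval (0 : Fin n → k) : MvPolynomial (Fin n) k →ₐ[k] k).toRingHom := by
      rw [truncIdeal, Ideal.span_le]
      rintro _ ⟨j, rfl⟩
      simp [RingHom.mem_ker, zero_pow hp.ne']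
    exact h ha)

variable (r : ℕ)

/-- For `i < r`, the index of `xᵢ` among the `2r` variables. -/
def idx1 (i : Fin r) : Fin (2 * r) := ⟨i, by omega⟩

/-- For `i < r`, the index of `x_{i+r}` among the `2r` variables. -/
def idx2 (i : Fin r) : Fin (2 * r) := ⟨i + r, by omega⟩

/-- The Hamiltonian derivation `D_H(f) = ∑ᵢ (∂ᵢ(f)∂_{i+r} - ∂_{i+r}(f)∂ᵢ)`. -/
def DH [CharP k p] (f : TruncPoly k p (2 * r)) :
    Derivation k (TruncPoly k p (2 * r)) (TruncPoly k p (2 * r)) :=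
  ∑ i : Fin r,
    (pd k p (2 * r) (idx1 r i) f • pdD k p (2 * r) (idx2 r i)
      - pd k p (2 * r) (idx2 r i) f • pdD k p (2 * r) (idx1 r i))

/-- The Poisson bracket `[f,g] = D_H(f)(g)` on `B_{2r}`. -/
def pbr [CharP k p] (f g : TruncPoly k p (2 * r)) : TruncPoly k p (2 * r) :=
  DH k p r f g

/-- The image `Hₙ' = D_H(Bₙ)` of the Hamiltonian map, as a `k`-subspace of
derivations (it equals the span of the range of the linear map `D_H`). -/
def HnP [CharP k p] :
    Submodule k (Derivation k (TruncPoly k p (2 * r)) (TruncPoly k p (2 * r))) :=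
  Submodule.span k (Set.range (DH k p r))

/-- The substitution `x_j ↦ x_{r+j}`, as a map `B_r → B_{2r}`. -/
def shiftHom : TruncPoly k p r →ₐ[k] TruncPoly k p (2 * r) :=
  Ideal.Quotient.liftₐ (truncIdeal k p r)
    ((Bmk k p (2 * r)).comp (rename (idx2 r))) (by
      intro a ha
      have h : truncIdeal k p r ≤ RingHom.ker
          (((Bmk k p (2 * r)).comp (rename (idx2 r))).toRingHom) := by
        rw [truncIdeal, Ideal.span_le]
        rintro _ ⟨j, rfl⟩
        have : ((Bmk k p (2 * r)).comp (rename (idx2 r))) ((X j : MvPolynomial (Fin r) k) ^ p)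
            = Bmk k p (2 * r) ((X (idx2 r j) : MvPolynomial (Fin (2 * r)) k) ^ p) := by
          simp [map_pow]
        simp only [SetLike.mem_coe, RingHom.mem_ker, AlgHom.toRingHom_eq_coe,
          RingHom.coe_coe]
        rw [this]
        exact Ideal.Quotient.eq_zero_iff_mem.mpr (Ideal.subset_span ⟨idx2 r j, rfl⟩)
      exact h ha)

/-- `θ_r : W_r → B_{2r}`, `∑ fᵢ ∂ᵢ ↦ ∑ xᵢ fᵢ(x_{r+1},…,x_{2r})`. -/
def theta [CharP k p]
    (D : Derivation k (TruncPoly k p r) (TruncPoly k p r)) : TruncPoly k p (2 * r) :=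
  ∑ i : Fin r, mkX k p (2 * r) (idx1 r i) * shiftHom k p r (D (mkX k p r i))

/-- `β = D_H ∘ θ_r : W_r → Der(B_{2r})`. -/
def betaMap [CharP k p]
    (D : Derivation k (TruncPoly k p r) (TruncPoly k p r)) :
    Derivation k (TruncPoly k p (2 * r)) (TruncPoly k p (2 * r)) :=
  DH k p r (theta k p r D)

end


open MvPolynomial in
theorem coeff_pderiv' {k : Type} [Field k] {n : ℕ} (i : Fin n) (a : Fin n →₀ ℕ)
    (F : MvPolynomial (Fin n) k) :
    coeff a (pderiv i F) = (a i + 1) * coeff (a + Finsupp.single i 1) F := by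
  induction F using MvPolynomial.induction_on' with
  | monomial s c =>
      rw [pderiv_monomial, coeff_monomial, coeff_monomial]
      by_cases h : s = a + Finsupp.single i 1
      · subst h
        have h1 : a + Finsupp.single i 1 - Finsupp.single i 1 = a := by simp
        rw [if_pos h1, Finsupp.add_apply, Finsupp.single_eq_same, if_pos rfl]
        push_cast; ring
      · rw [if_neg h]
        by_cases h2 : s - Finsupp.single i 1 = a
        · by_cases h3 : 1 ≤ s i
          · exfalso; apply h
            rw [← h2, tsub_add_cancel_of_le (Finsupp.single_le_iff.mpr h3)]
          · have h4 : s i = 0 := by omega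
            rw [if_pos h2, h4]; ring
        · rw [if_neg h2]; ring
  | add f g hf hg => simp only [map_add, coeff_add, hf, hg]; ring

open MvPolynomial in
theorem coeff_zero_of_mem {k : Type} [Field k] {p n : ℕ} {F : MvPolynomial (Fin n) k}
    (hF : F ∈ truncIdeal k p n) {a : Fin n →₀ ℕ} (ha : ∀ i, a i < p) : coeff a F = 0 := by
  induction hF using Submodule.span_induction generalizing a with
  | mem x hx =>
      obtain ⟨j, rfl⟩ := hx
      show coeff a ((X j : MvPolynomial (Fin n) k) ^ p) = 0
      rw [X_pow_eq_monomial, coeff_monomial, if_neg]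
      intro h
      have h2 := ha j
      rw [← h] at h2
      simp at h2
  | zero => simp
  | add x y _ _ ihx ihy => simp [ihx ha, ihy ha]
  | smul c x _ ih =>
      rw [smul_eq_mul, coeff_mul]
      refine Finset.sum_eq_zero fun q hq => ?_
      rw [Finset.HasAntidiagonal.mem_antidiagonal] at hq
      have hq2 : ∀ i, q.2 i < p := fun i => by
        have h1 : q.1 i + q.2 i = a i := by rw [← hq, Finsupp.add_apply]
        have := ha i; omega
      rw [ih hq2, mul_zero]

open MvPolynomial in
theorem mem_of_high {k : Type} [Field k] {p n : ℕ} {F : MvPolynomial (Fin n) k}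
    (h : ∀ a ∈ F.support, ∃ i, p ≤ a i) : F ∈ truncIdeal k p n := by
  rw [F.as_sum]
  refine Ideal.sum_mem _ fun a ha => ?_
  obtain ⟨i, hi⟩ := h a ha
  have key : monomial a (coeff a F) =
      monomial (a - Finsupp.single i p) (coeff a F) * (X i : MvPolynomial (Fin n) k) ^ p := by
    rw [X_pow_eq_monomial, monomial_mul, mul_one,
      tsub_add_cancel_of_le (Finsupp.single_le_iff.mpr hi)]
  rw [key]
  exact Ideal.mul_mem_left _ _ (Ideal.subset_span ⟨i, rfl⟩)

theorem dsum_apply {R A : Type*} [CommRing R] [CommRing A] [Algebra R A] {ι : Type*}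
    (s : Finset ι) (D : ι → Derivation R A A) (x : A) :
    (∑ i ∈ s, D i) x = ∑ i ∈ s, D i x := by
  classical
  induction s using Finset.induction with
  | empty => simp
  | insert _ _ h ih => simp [Finset.sum_insert h, Derivation.add_apply, ih]

open MvPolynomial in
theorem pd_mkX {k : Type} [Field k] (p n : ℕ) [CharP k p] (i j : Fin n) :
    pd k p n i (mkX k p n j) = if i = j then 1 else 0 := by
  rw [mkX, pd_mk]
  by_cases h : i = j
  · subst h; rw [pderiv_X_self, if_pos rfl, map_one]
  · rw [pderiv_X_of_ne (Ne.symm h), if_neg h, map_zero]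

open MvPolynomial in
theorem pd_all_zero {k : Type} [Field k] {p n : ℕ} [CharP k p] (hp : 1 < p)
    (f : TruncPoly k p n) (h : ∀ i, pd k p n i f = 0) :
    ∃ c : k, f = algebraMap k (TruncPoly k p n) c := by
  obtain ⟨F, rfl⟩ := Bmk_surjective k p n f
  refine ⟨coeff 0 F, ?_⟩
  have halg : algebraMap k (TruncPoly k p n) (coeff 0 F) = Bmk k p n (C (coeff 0 F)) := by
    rw [← MvPolynomial.algebraMap_eq]
    exact ((Bmk k p n).commutes _).symm
  rw [halg]
  have hmem : F - C (coeff 0 F) ∈ truncIdeal k p n := by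
    apply mem_of_high
    intro a ha
    by_contra hcon
    push_neg at hcon
    rw [mem_support_iff] at ha
    apply ha
    rw [coeff_sub, coeff_C]
    by_cases h0 : a = 0
    · subst h0; simp
    · rw [if_neg (Ne.symm h0), sub_zero]
      obtain ⟨i, hi⟩ : ∃ i, a i ≠ 0 := by
        by_contra hc; push_neg at hc
        exact h0 (Finsupp.ext hc)
      have hFi : pderiv i F ∈ truncIdeal k p n := by
        have := h i
        rw [pd_mk] at this
        rw [Bmk, Ideal.Quotient.mkₐ_eq_mk] at this
        exact (Ideal.Quotient.eq_zero_iff_mem).mp this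
      have hb : ∀ j, ((a - Finsupp.single i 1 : Fin n →₀ ℕ)) j < p := fun j => by
        rw [Finsupp.tsub_apply]
        exact lt_of_le_of_lt (Nat.sub_le _ _) (hcon j)
      have hz := coeff_zero_of_mem hFi hb
      rw [coeff_pderiv'] at hz
      have hba : a - Finsupp.single i 1 + Finsupp.single i 1 = a :=
        tsub_add_cancel_of_le (Finsupp.single_le_iff.mpr (Nat.one_le_iff_ne_zero.mpr hi))
      rw [hba] at hz
      have hbi : ((a - Finsupp.single i 1 : Fin n →₀ ℕ)) i + 1 = a i := by
        rw [Finsupp.tsub_apply, Finsupp.single_eq_same]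
        omega
      have hcast : ((((a - Finsupp.single i 1 : Fin n →₀ ℕ)) i : k) + 1) = ((a i : k)) := by
        rw [← hbi]; push_cast; ring
      rw [hcast] at hz
      have hne : ((a i : k)) ≠ 0 := by
        rw [Ne, CharP.cast_eq_zero_iff k p]
        intro hdvd
        have := Nat.le_of_dvd (Nat.pos_of_ne_zero hi) hdvd
        have := hcon i
        omega
      exact (mul_eq_zero.mp hz).resolve_left hne
  exact Ideal.Quotient.eq.mpr hmem

theorem idx1_ne_idx2' (r : ℕ) (i j : Fin r) : idx1 r i ≠ idx2 r j := by
  intro h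
  have h2 := congrArg Fin.val h
  simp only [idx1, idx2] at h2
  omega

theorem idx2_inj' (r : ℕ) (i j : Fin r) : idx2 r i = idx2 r j ↔ i = j := by
  constructor
  · intro h
    have h2 := congrArg Fin.val h
    simp only [idx2] at h2
    exact Fin.ext (by omega)
  · rintro rfl; rfl

theorem idx1_inj' (r : ℕ) (i j : Fin r) : idx1 r i = idx1 r j ↔ i = j := by
  constructor
  · intro h
    have h2 := congrArg Fin.val h
    simp only [idx1] at h2
    exact Fin.ext (by omega)
  · rintro rfl; rfl

open MvPolynomial in
theorem pbr_mkX2 {k : Type} [Field k] (p r : ℕ) [CharP k p] (f : TruncPoly k p (2 * r))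
    (j : Fin r) :
    pbr k p r f (mkX k p (2 * r) (idx2 r j)) = pd k p (2 * r) (idx1 r j) f := by
  rw [pbr, DH, dsum_apply]
  rw [Finset.sum_eq_single j]
  · rw [Derivation.sub_apply, Derivation.smul_apply, Derivation.smul_apply, pdD_apply,
      pdD_apply, pd_mkX, pd_mkX, if_pos rfl, if_neg (idx1_ne_idx2' r j j), smul_eq_mul,
      smul_eq_mul, mul_one, mul_zero, sub_zero]
  · intro i _ hij
    rw [Derivation.sub_apply, Derivation.smul_apply, Derivation.smul_apply, pdD_apply,
      pdD_apply, pd_mkX, pd_mkX, if_neg (fun h => hij ((idx2_inj' r i j).mp h)),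
      if_neg (idx1_ne_idx2' r i j), smul_zero, smul_zero, sub_zero]
  · intro h; exact absurd (Finset.mem_univ j) h

open MvPolynomial in
theorem pbr_mkX1 {k : Type} [Field k] (p r : ℕ) [CharP k p] (f : TruncPoly k p (2 * r))
    (j : Fin r) :
    pbr k p r f (mkX k p (2 * r) (idx1 r j)) = -(pd k p (2 * r) (idx2 r j) f) := by
  rw [pbr, DH, dsum_apply]
  rw [Finset.sum_eq_single j]
  · rw [Derivation.sub_apply, Derivation.smul_apply, Derivation.smul_apply, pdD_apply,
      pdD_apply, pd_mkX, pd_mkX, if_pos rfl, if_neg (fun h => idx1_ne_idx2' r j j h.symm),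
      smul_eq_mul, smul_eq_mul, mul_one, mul_zero, zero_sub]
  · intro i _ hij
    rw [Derivation.sub_apply, Derivation.smul_apply, Derivation.smul_apply, pdD_apply,
      pdD_apply, pd_mkX, pd_mkX, if_neg (fun h => hij ((idx1_inj' r i j).mp h)),
      if_neg (fun h => idx1_ne_idx2' r j i h.symm), smul_zero, smul_zero, sub_zero]
  · intro h; exact absurd (Finset.mem_univ j) h

/-- the Lie center of `B_{2r}` for the Poisson bracket is exactly the
scalars `k`. -/
theorem stmt5 (k : Type) [Field k] (p r : ℕ) [CharP k p] (hp : 3 < p) :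
    ∀ f : TruncPoly k p (2 * r),
      (∀ g : TruncPoly k p (2 * r), pbr k p r f g = 0) ↔
        ∃ c : k, f = algebraMap k (TruncPoly k p (2 * r)) c := by
  intro f
  constructor
  · intro h
    apply pd_all_zero (by omega : 1 < p)
    intro i
    by_cases hir : (i : ℕ) < r
    · have hi : i = idx1 r ⟨(i : ℕ), hir⟩ := Fin.ext rfl
      rw [hi, ← pbr_mkX2]
      exact h _
    · have hi2 : (i : ℕ) - r < r := by omega
      have hi : i = idx2 r ⟨(i : ℕ) - r, hi2⟩ := Fin.ext (by simp [idx2]; omega)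
      rw [hi, ← neg_eq_zero, ← pbr_mkX1]
      exact h _
  · rintro ⟨c, rfl⟩ g
    have halg : algebraMap k (TruncPoly k p (2 * r)) c = Bmk k p (2 * r) (MvPolynomial.C c) := by
      rw [← MvPolynomial.algebraMap_eq]
      exact ((Bmk k p (2 * r)).commutes _).symm
    have hpd : ∀ i, pd k p (2 * r) i (algebraMap k (TruncPoly k p (2 * r)) c) = 0 := by
      intro i
      rw [halg, pd_mk, MvPolynomial.pderiv_C, map_zero]
    rw [pbr, DH, dsum_apply]
    apply Finset.sum_eq_zero
    intro i _
    rw [Derivation.sub_apply, Derivation.smul_apply, Derivation.smul_apply, hpd, hpd]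
    simp
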